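/- arXiv:1312.1668 — 2 statements merged into one kernel-verified Lean document; each statement's English description precedes it below -/
import Mathlib

section
/- Suppose f(r) := μ(B(x,r)) is locally absolutely continuous on (0,∞), and let q̲ = essliminf_{r→0} r f'(r)/f(r). Then every q with 0 < q < q̲ belongs to the lower Q-exponent set at x: there exist constants C_q > 0 such that μ(B(x,r))/μ(B(x,R)) ≤ C_q (r/R)^q for all 0 < r < R ≤ 1. -/
open MeasureTheory Metric Set Filter

theorem lowerQ_from_essliminf {X : Type*} [MetricSpace X] [MeasurableSpace X] [BorelSpace X] (μ : Measure X)
    (hpos : ∀ (y : X) (r : ℝ), 0 < r → 0 < μ (ball y r))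
    (hfin : ∀ (y : X) (r : ℝ), 0 < r → μ (ball y r) < ⊤)
    (x : X) (f f' : ℝ → ℝ)
    (hf : ∀ r : ℝ, 0 < r → f r = (μ (ball x r)).toReal)
    (hfpos : ∀ r : ℝ, 0 < r → 0 < f r)
    (hint : ∀ a b : ℝ, 0 < a → a ≤ b → IntervalIntegrable f' volume a b)
    (hftc : ∀ a b : ℝ, 0 < a → a ≤ b → f b - f a = ∫ ρ in a..b, f' ρ)
    (qlow : ℝ)
    (hqlow : qlow = liminf (fun ρ : ℝ => ρ * f' ρ / f ρ)
      ((MeasureTheory.ae (volume : Measure ℝ)) ⊓ nhdsWithin 0 (Set.Ioi 0)))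
    (q : ℝ) (hq : 0 < q) (hq' : q < qlow) :
    ∃ C : ℝ, 0 < C ∧ ∀ r R : ℝ, 0 < r → r < R → R ≤ 1 →
      (μ (ball x r)).toReal ≤ C * (r / R) ^ q * (μ (ball x R)).toReal := by
  -- monotonicity of f
  have hmono : ∀ a b : ℝ, 0 < a → a ≤ b → f a ≤ f b := by
    intro a b ha hab
    rw [hf a ha, hf b (ha.trans_le hab)]
    exact ENNReal.toReal_mono (hfin x b (ha.trans_le hab)).ne
      (measure_mono (ball_subset_ball hab))
  -- extract q' with q < q' and an eventual lower bound
  obtain ⟨q', hqq', hev⟩ : ∃ q', q < q' ∧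
      ∀ᶠ ρ in (MeasureTheory.ae (volume : Measure ℝ)) ⊓ nhdsWithin 0 (Set.Ioi 0),
        q' ≤ ρ * f' ρ / f ρ := by
    rw [Filter.liminf_eq] at hqlow
    set S : Set ℝ := {a | ∀ᶠ ρ in (MeasureTheory.ae (volume : Measure ℝ)) ⊓
        nhdsWithin 0 (Set.Ioi 0), a ≤ ρ * f' ρ / f ρ} with hS
    have hne : S.Nonempty := by
      by_contra h
      rw [Set.not_nonempty_iff_eq_empty] at h
      rw [h, Real.sSup_empty] at hqlow
      linarith [hqlow ▸ hq']
    obtain ⟨a, haS, hqa⟩ := exists_lt_of_lt_csSup hne (hqlow ▸ hq')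
    exact ⟨a, hqa, haS⟩
  -- unpack the inf filter: a.e. set and a δ
  rw [Filter.eventually_inf] at hev
  obtain ⟨s, hs, tset, htset, hst⟩ := hev
  obtain ⟨δ, hδmem, hδsub⟩ := mem_nhdsGT_iff_exists_Ioo_subset.1 htset
  have hδ : (0:ℝ) < δ := hδmem
  have hae : ∀ᵐ ρ : ℝ ∂(volume : Measure ℝ), ρ ∈ Set.Ioo (0:ℝ) δ → q' ≤ ρ * f' ρ / f ρ := by
    filter_upwards [hs] with ρ hρ hρδ
    exact hst ρ ⟨hρ, hδsub hρδ⟩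
  set δ₀ : ℝ := min δ 1 with hδ₀def
  have hδ₀ : 0 < δ₀ := lt_min hδ one_pos
  have hδ₀le : δ₀ ≤ δ := min_le_left _ _
  have hδ₀1 : δ₀ ≤ 1 := min_le_right _ _
  have hq'pos : 0 < q' := hq.trans hqq'
  set t : ℝ := (q' - q) / (q * q') with ht_def
  have ht : 0 < t := div_pos (by linarith) (mul_pos hq hq'pos)
  have hqt : q * t = 1 - q / q' := by
    rw [ht_def]
    field_simp [ht_def]
  have hone : 1 + q' * t = q' / q := by
    rw [ht_def]
    field_simp [ht_def]
    ring
  have hexpqt : Real.exp (q * t) ≤ q' / q := by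
    have h1 : Real.log (q / q') ≤ q / q' - 1 :=
      Real.log_le_sub_one_of_pos (div_pos hq hq'pos)
    have h2 : Real.log (q / q') = - Real.log (q' / q) := by
      rw [← Real.log_inv, inv_div]
    have h3 : q * t ≤ Real.log (q' / q) := by
      rw [hqt]; linarith [h2 ▸ h1]
    calc Real.exp (q * t) ≤ Real.exp (Real.log (q' / q)) := Real.exp_le_exp.2 h3
      _ = q' / q := Real.exp_log (div_pos hq'pos hq)
  -- the key step
  have key : ∀ a : ℝ, 0 < a → a * Real.exp t ≤ δ₀ → (q' / q) * f a ≤ f (a * Real.exp t) := by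
    intro a ha hb
    set b : ℝ := a * Real.exp t with hbdef
    have hab : a < b := by
      have : 1 < Real.exp t := by simpa using Real.exp_lt_exp.2 ht
      nlinarith [Real.exp_pos t]
    have hb0 : 0 < b := ha.trans hab
    have hfc : f b - f a = ∫ ρ in a..b, f' ρ := hftc a b ha hab.le
    -- lower bound for the integral
    have hglb : ∫ ρ in a..b, (q' * f a) / ρ ≤ ∫ ρ in a..b, f' ρ := by
      apply intervalIntegral.integral_mono_ae_restrict hab.le
      · apply ContinuousOn.intervalIntegrable
        apply ContinuousOn.div continuousOn_const continuousOn_id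
        intro y hy
        rw [Set.uIcc_of_le hab.le] at hy
        exact ne_of_gt (lt_of_lt_of_le ha hy.1)
      · exact hint a b ha hab.le
      · have hneδ : ∀ᵐ ρ : ℝ ∂(volume : Measure ℝ), ρ ≠ δ := by
          rw [MeasureTheory.ae_iff]
          have : {ρ : ℝ | ¬ ρ ≠ δ} = {δ} := by ext y; simp
          rw [this]
          exact Real.volume_singleton
        have hle : ∀ᵐ ρ ∂(volume.restrict (Set.Icc a b)), q' * f a / ρ ≤ f' ρ := by
          rw [MeasureTheory.ae_restrict_iff' measurableSet_Icc]
          filter_upwards [hae, hneδ] with ρ hρ hρδ hρI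
          have hρ0 : 0 < ρ := lt_of_lt_of_le ha hρI.1
          have hρδ' : ρ < δ := lt_of_le_of_ne (le_trans hρI.2 (hb.trans hδ₀le)) hρδ
          have h1 : q' ≤ ρ * f' ρ / f ρ := hρ ⟨hρ0, hρδ'⟩
          have hfρ : 0 < f ρ := hfpos ρ hρ0
          have h2 : q' * f ρ ≤ ρ * f' ρ := by
            rw [le_div_iff₀ hfρ] at h1; linarith
          have h3 : q' * f a ≤ q' * f ρ :=
            mul_le_mul_of_nonneg_left (hmono a ρ ha hρI.1) hq'pos.le
          rw [div_le_iff₀ hρ0]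
          calc q' * f a ≤ ρ * f' ρ := h3.trans h2
            _ = f' ρ * ρ := mul_comm _ _
        exact hle
    have hval : ∫ ρ in a..b, (q' * f a) / ρ = (q' * f a) * t := by
      have h0 : (0:ℝ) ∉ Set.uIcc a b := by
        rw [Set.uIcc_of_le hab.le]
        intro h
        exact absurd h.1 (not_le.2 ha)
      have : ∫ ρ in a..b, (q' * f a) / ρ = (q' * f a) * ∫ ρ in a..b, ρ⁻¹ := by
        simp_rw [div_eq_mul_inv]
        exact intervalIntegral.integral_const_mul _ _
      rw [this, integral_inv h0]
      have : b / a = Real.exp t := by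
        rw [hbdef]; field_simp
      rw [this, Real.log_exp]
    have hstep : f a + q' * f a * t ≤ f b := by
      have := hval ▸ hglb
      linarith [hfc ▸ this]
    have : (1 + q' * t) * f a ≤ f b := by nlinarith
    calc (q' / q) * f a = (1 + q' * t) * f a := by rw [hone]
      _ ≤ f b := this
  -- iteration
  have iter : ∀ n : ℕ, ∀ a : ℝ, 0 < a → a * Real.exp (n * t) ≤ δ₀ →
      (q' / q) ^ n * f a ≤ f (a * Real.exp (n * t)) := by
    intro n
    induction n with
    | zero => intro a ha _; simp
    | succ n ih =>
      intro a ha hb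
      have hexp : Real.exp ((↑(n+1) : ℝ) * t) = Real.exp ((n:ℝ) * t) * Real.exp t := by
        rw [← Real.exp_add]; push_cast; ring_nf
      have ha' : 0 < a * Real.exp ((n:ℝ) * t) := mul_pos ha (Real.exp_pos _)
      have hle1 : a * Real.exp ((n:ℝ) * t) * Real.exp t ≤ δ₀ := by
        rw [hexp, ← mul_assoc] at hb
        exact hb
      have hle2 : a * Real.exp ((n:ℝ) * t) ≤ δ₀ := by
        have h1 : (1:ℝ) ≤ Real.exp t := by
          rw [Real.one_le_exp_iff]; exact ht.le
        nlinarith [hle1, Real.exp_pos ((n:ℝ) * t)]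
      have ihh := ih a ha hle2
      have hk := key (a * Real.exp ((n:ℝ) * t)) ha' hle1
      have hqq : (0:ℝ) ≤ q' / q := (div_pos hq'pos hq).le
      calc (q' / q) ^ (n+1) * f a = (q' / q) * ((q' / q) ^ n * f a) := by ring
        _ ≤ (q' / q) * f (a * Real.exp ((n:ℝ) * t)) :=
            mul_le_mul_of_nonneg_left ihh hqq
        _ ≤ f (a * Real.exp ((n:ℝ) * t) * Real.exp t) := hk
        _ = f (a * Real.exp ((↑(n+1) : ℝ) * t)) := by rw [hexp, mul_assoc]
  -- the main estimate inside (0, δ₀]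
  have main : ∀ r R : ℝ, 0 < r → r < R → R ≤ δ₀ →
      f r ≤ Real.exp (q * t) * (r / R) ^ q * f R := by
    intro r R hr hrR hRδ
    have hR0 : 0 < R := hr.trans hrR
    set L : ℝ := Real.log (R / r) with hLdef
    have hL : 0 < L := Real.log_pos ((one_lt_div hr).2 hrR)
    set n : ℕ := ⌊L / t⌋₊ with hndef
    have hnt : (n : ℝ) * t ≤ L := by
      have h1 : (n : ℝ) ≤ L / t := Nat.floor_le (div_pos hL ht).le
      calc (n : ℝ) * t ≤ (L / t) * t := mul_le_mul_of_nonneg_right h1 ht.le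
        _ = L := by field_simp
    have hLn : L - t ≤ (n : ℝ) * t := by
      have h1 : L / t < (n : ℝ) + 1 := Nat.lt_floor_add_one _
      have h2 : L < ((n : ℝ) + 1) * t := by
        calc L = (L / t) * t := by field_simp
          _ < ((n : ℝ) + 1) * t := by
              exact mul_lt_mul_of_pos_right h1 ht
      linarith
    have hre : r * Real.exp ((n:ℝ) * t) ≤ R := by
      have h1 : Real.exp ((n:ℝ) * t) ≤ Real.exp L := Real.exp_le_exp.2 hnt
      have h2 : Real.exp L = R / r := Real.exp_log (div_pos hR0 hr)
      calc r * Real.exp ((n:ℝ) * t) ≤ r * (R / r) :=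
            mul_le_mul_of_nonneg_left (h2 ▸ h1) hr.le
        _ = R := by field_simp
    have hiter := iter n r hr (hre.trans hRδ)
    have hfmono : f (r * Real.exp ((n:ℝ) * t)) ≤ f R :=
      hmono _ _ (mul_pos hr (Real.exp_pos _)) hre
    have hmain1 : (q' / q) ^ n * f r ≤ f R := hiter.trans hfmono
    have hpow : Real.exp (q * L - q * t) ≤ (q' / q) ^ n := by
      calc Real.exp (q * L - q * t) ≤ Real.exp (q * ((n:ℝ) * t)) := by
            apply Real.exp_le_exp.2
            nlinarith
        _ = Real.exp (q * t) ^ n := by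
            rw [← Real.exp_nat_mul]; ring_nf
        _ ≤ (q' / q) ^ n := pow_le_pow_left₀ (Real.exp_pos _).le hexpqt n
    have hmain2 : Real.exp (q * L - q * t) * f r ≤ f R := by
      calc Real.exp (q * L - q * t) * f r ≤ (q' / q) ^ n * f r :=
            mul_le_mul_of_nonneg_right hpow (hfpos r hr).le
        _ ≤ f R := hmain1
    have hrr : f r ≤ Real.exp (q * t - q * L) * f R := by
      have hepos := Real.exp_pos (q * L - q * t)
      rw [← le_div_iff₀' hepos] at hmain2
      calc f r ≤ f R / Real.exp (q * L - q * t) := hmain2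
        _ = Real.exp (q * t - q * L) * f R := by
            rw [div_eq_mul_inv, ← Real.exp_neg, neg_sub, mul_comm]
    have hrpow : Real.exp (- (q * L)) = (r / R) ^ q := by
      have h1 : (r / R : ℝ) ^ q = Real.exp (Real.log (r / R) * q) :=
        Real.rpow_def_of_pos (div_pos hr hR0) q
      have h2 : Real.log (r / R) = - L := by
        rw [hLdef, ← Real.log_inv, inv_div]
      rw [h1, h2]; ring_nf
    calc f r ≤ Real.exp (q * t - q * L) * f R := hrr
      _ = Real.exp (q * t) * Real.exp (-(q * L)) * f R := by
          rw [← Real.exp_add]; ring_nf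
      _ = Real.exp (q * t) * (r / R) ^ q * f R := by rw [hrpow]
  -- assemble the final constant
  refine ⟨Real.exp (q * t) * δ₀ ^ (-q), mul_pos (Real.exp_pos _) (Real.rpow_pos_of_pos hδ₀ _), ?_⟩
  intro r R hr hrR hR1
  have hR0 : 0 < R := hr.trans hrR
  rw [← hf r hr, ← hf R hR0]
  have hrRpos : 0 < r / R := div_pos hr hR0
  have hfRpos : 0 < f R := hfpos R hR0
  have hδ₀q : (1:ℝ) ≤ δ₀ ^ (-q) := by
    rw [Real.rpow_neg hδ₀.le]
    rw [le_inv_comm₀ one_pos (Real.rpow_pos_of_pos hδ₀ q)]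
    simpa using Real.rpow_le_one hδ₀.le hδ₀1 hq.le
  have hexp1 : (1:ℝ) ≤ Real.exp (q * t) := by
    rw [Real.one_le_exp_iff]; positivity
  have hmul : Real.exp (q * t) ≤ Real.exp (q * t) * δ₀ ^ (-q) :=
    le_mul_of_one_le_right (Real.exp_pos _).le hδ₀q
  by_cases hRδ : R ≤ δ₀
  · have h := main r R hr hrR hRδ
    calc f r ≤ Real.exp (q * t) * (r / R) ^ q * f R := h
      _ ≤ Real.exp (q * t) * δ₀ ^ (-q) * (r / R) ^ q * f R := by
          apply mul_le_mul_of_nonneg_right _ hfRpos.le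
          exact mul_le_mul_of_nonneg_right hmul (Real.rpow_pos_of_pos hrRpos q).le
  · push_neg at hRδ
    by_cases hrδ : r < δ₀
    · -- r < δ₀ < R
      have h := main r δ₀ hr hrδ le_rfl
      have hfδR : f δ₀ ≤ f R := hmono δ₀ R hδ₀ hRδ.le
      have hsplit : (r / δ₀ : ℝ) ^ q ≤ δ₀ ^ (-q) * (r / R) ^ q := by
        have he : (r / δ₀ : ℝ) = (r / R) * (R / δ₀) := by field_simp
        rw [he, Real.mul_rpow hrRpos.le (div_pos hR0 hδ₀).le]
        have h1 : (R / δ₀ : ℝ) ^ q ≤ (1 / δ₀) ^ q := by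
          apply Real.rpow_le_rpow (div_pos hR0 hδ₀).le _ hq.le
          gcongr
        have h2 : ((1:ℝ) / δ₀) ^ q = δ₀ ^ (-q) := by
          rw [one_div, ← Real.rpow_neg_one]
          rw [← Real.rpow_mul hδ₀.le]
          norm_num
        rw [h2] at h1
        calc (r / R : ℝ) ^ q * (R / δ₀) ^ q ≤ (r / R) ^ q * δ₀ ^ (-q) :=
              mul_le_mul_of_nonneg_left h1 (Real.rpow_pos_of_pos hrRpos q).le
          _ = δ₀ ^ (-q) * (r / R) ^ q := mul_comm _ _
      calc f r ≤ Real.exp (q * t) * (r / δ₀) ^ q * f δ₀ := h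
        _ ≤ Real.exp (q * t) * (δ₀ ^ (-q) * (r / R) ^ q) * f δ₀ := by
            apply mul_le_mul_of_nonneg_right _ (hfpos δ₀ hδ₀).le
            exact mul_le_mul_of_nonneg_left hsplit (Real.exp_pos _).le
        _ ≤ Real.exp (q * t) * (δ₀ ^ (-q) * (r / R) ^ q) * f R := by
            apply mul_le_mul_of_nonneg_left hfδR
            positivity
        _ = Real.exp (q * t) * δ₀ ^ (-q) * (r / R) ^ q * f R := by ring
    · -- δ₀ ≤ r < R ≤ 1
      push_neg at hrδ
      have h1 : δ₀ ≤ r / R := by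
        calc δ₀ ≤ r := hrδ
          _ ≤ r / R := by
            rw [le_div_iff₀ hR0]
            calc r * R ≤ r * 1 := mul_le_mul_of_nonneg_left hR1 hr.le
              _ = r := mul_one r
      have h2 : δ₀ ^ q ≤ (r / R) ^ q := Real.rpow_le_rpow hδ₀.le h1 hq.le
      have h3 : (1:ℝ) ≤ δ₀ ^ (-q) * (r / R) ^ q := by
        rw [Real.rpow_neg hδ₀.le, inv_mul_eq_div]
        exact (one_le_div (Real.rpow_pos_of_pos hδ₀ q)).2 h2
      calc f r ≤ f R := hmono r R hr hrR.le
        _ ≤ Real.exp (q * t) * (δ₀ ^ (-q) * (r / R) ^ q) * f R := by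
            apply le_mul_of_one_le_left hfRpos.le
            calc (1:ℝ) = 1 * 1 := by ring
              _ ≤ Real.exp (q * t) * (δ₀ ^ (-q) * (r / R) ^ q) :=
                  mul_le_mul hexp1 h3 one_pos.le (Real.exp_pos (q*t)).le
        _ = Real.exp (q * t) * δ₀ ^ (-q) * (r / R) ^ q * f R := by ring
end

section
/- Under the same hypotheses as the previous statement (k locally absolutely continuous increasing homeomorphism of [0,∞) with m ≤ ρk'(ρ)/k(ρ) ≤ M a.e.), the radial stretching F(x) = (k(|x|)/|x|)x, F(0)=0, satisfies the lower distortion bound |F(x) − F(y)| ≥ (m/(1+2m)) · inf_{|x| ≤ ξ ≤ |y|} (k(ξ)/ξ) · |x − y| for all x, y ∈ ℝⁿ with |x| ≤ |y|, x ≠ y. -/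
open MeasureTheory Metric Set

theorem radial_stretching_aux (a b α β c lam t : ℝ)
    (hu : c * lam * (b - a) ≤ β * b - α * a) (hu0 : 0 ≤ c * lam * (b - a))
    (h2a : (c * lam) ^ 2 ≤ α * β) (ht : t ≤ a * b) :
    c ^ 2 * lam ^ 2 * (a ^ 2 - 2 * t + b ^ 2) ≤
      (α * a) ^ 2 - 2 * (α * β) * t + (β * b) ^ 2 := by
  have h1 : (c * lam * (b - a)) ^ 2 ≤ (β * b - α * a) ^ 2 := pow_le_pow_left₀ hu0 hu 2
  have h2 : 0 ≤ (α * β - (c * lam) ^ 2) * (a * b - t) :=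
    mul_nonneg (by linarith) (by linarith)
  nlinarith [h1, h2]

theorem radial_stretching_lower_bound (n : ℕ) (hn : 2 ≤ n)
    (k k' : ℝ → ℝ) (m M : ℝ) (hm : 0 < m) (hmM : m ≤ M)
    (hk0 : k 0 = 0)
    (hmono : StrictMonoOn k (Set.Ici 0))
    (hbij : Set.BijOn k (Set.Ici 0) (Set.Ici 0))
    (hint : ∀ a b : ℝ, 0 ≤ a → a ≤ b → IntervalIntegrable k' volume a b)
    (hftc : ∀ a b : ℝ, 0 ≤ a → a ≤ b → k b - k a = ∫ ρ in a..b, k' ρ)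
    (hbound : ∀ᵐ ρ ∂(volume.restrict (Set.Ioi (0:ℝ))),
      m ≤ ρ * k' ρ / k ρ ∧ ρ * k' ρ / k ρ ≤ M)
    (F : EuclideanSpace ℝ (Fin n) → EuclideanSpace ℝ (Fin n))
    (hF : ∀ z : EuclideanSpace ℝ (Fin n), F z = (k ‖z‖ / ‖z‖) • z)
    (x y : EuclideanSpace ℝ (Fin n)) (hxy : ‖x‖ ≤ ‖y‖) (hne : x ≠ y) :
    (m / (1 + 2 * m)) *
        sInf ((fun ξ => k ξ / ξ) '' (Set.Ioc 0 ‖y‖ ∩ Set.Icc ‖x‖ ‖y‖)) *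
        ‖x - y‖ ≤ ‖F x - F y‖ := by
  have hb : 0 < ‖y‖ := by
    rcases (norm_nonneg y).lt_or_eq with h | h
    · exact h
    · exfalso
      apply hne
      have hy : y = 0 := norm_eq_zero.mp h.symm
      have hx : x = 0 := norm_le_zero_iff.mp (by simpa [hy] using hxy)
      rw [hx, hy]
  set a := ‖x‖ with hadef
  set b := ‖y‖ with hbdef
  have ha0 : 0 ≤ a := norm_nonneg x
  set S := (fun ξ => k ξ / ξ) '' (Set.Ioc 0 b ∩ Set.Icc a b) with hS
  have hmemb : k b / b ∈ S := ⟨b, ⟨⟨hb, le_refl b⟩, hxy, le_refl b⟩, rfl⟩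
  have hkpos : ∀ ξ : ℝ, 0 < ξ → 0 < k ξ := fun ξ hξ => by
    have := hmono Set.self_mem_Ici (Set.mem_Ici.mpr hξ.le) hξ
    rwa [hk0] at this
  have hSbdd : BddBelow S := ⟨0, by
    rintro v ⟨ξ, ⟨⟨hξ0, _⟩, _⟩, rfl⟩
    exact div_nonneg (hkpos ξ hξ0).le hξ0.le⟩
  set lam := sInf S with hlamdef
  have hlam0 : 0 ≤ lam := le_csInf ⟨_, hmemb⟩ (by
    rintro v ⟨ξ, ⟨⟨hξ0, _⟩, _⟩, rfl⟩
    exact div_nonneg (hkpos ξ hξ0).le hξ0.le)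
  have hlamb : lam ≤ k b / b := csInf_le hSbdd hmemb
  have hmden : (0:ℝ) < 1 + 2 * m := by linarith
  set c := m / (1 + 2 * m) with hcdef
  have hc0 : 0 ≤ c := div_nonneg hm.le hmden.le
  have hcm : c ≤ m := by rw [hcdef, div_le_iff₀ hmden]; nlinarith
  have hc1 : c ≤ 1 := by rw [hcdef, div_le_one hmden]; linarith
  have hlambb : lam * b ≤ k b := by
    have := mul_le_mul_of_nonneg_right hlamb hb.le
    rwa [div_mul_cancel₀ _ hb.ne'] at this
  rcases eq_or_ne x 0 with hx0 | hx0
  · -- x = 0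
    have hFx : F x = 0 := by rw [hF, hx0, smul_zero]
    have hFy : ‖F y‖ = k b := by
      rw [hF, norm_smul, Real.norm_eq_abs,
        abs_of_nonneg (div_nonneg (hkpos b hb).le hb.le)]
      field_simp
      rfl
    have hxy' : ‖x - y‖ = b := by rw [hx0, zero_sub, norm_neg]
    rw [hFx, zero_sub, norm_neg, hFy, hxy']
    nlinarith [mul_le_mul_of_nonneg_right (mul_le_mul_of_nonneg_right hc1 hlam0) hb.le]
  · -- x ≠ 0
    have hapos : 0 < a := norm_pos_iff.mpr hx0
    have hlamle : ∀ ξ : ℝ, a ≤ ξ → ξ ≤ b → lam * ξ ≤ k ξ := by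
      intro ξ h1 h2
      have hξ0 : 0 < ξ := lt_of_lt_of_le hapos h1
      have := csInf_le hSbdd ⟨ξ, ⟨⟨hξ0, h2⟩, h1, h2⟩, rfl⟩
      have := mul_le_mul_of_nonneg_right this hξ0.le
      rwa [div_mul_cancel₀ _ hξ0.ne'] at this
    -- key: k b - k a ≥ m * lam * (b - a)
    have hkey : m * lam * (b - a) ≤ k b - k a := by
      rw [hftc a b ha0 hxy]
      have hint' := hint a b ha0 hxy
      have hconst : IntervalIntegrable (fun _ : ℝ => m * lam) volume a b :=
        intervalIntegrable_const
      have hsub : Set.Icc a b ⊆ Set.Ioi (0:ℝ) := fun ρ hρ => lt_of_lt_of_le hapos hρ.1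
      have h1 : ∀ᵐ ρ ∂(volume.restrict (Set.Icc a b)),
          m ≤ ρ * k' ρ / k ρ ∧ ρ * k' ρ / k ρ ≤ M :=
        ae_restrict_of_ae_restrict_of_subset hsub hbound
      have h2 : ∀ᵐ ρ ∂(volume.restrict (Set.Icc a b)), ρ ∈ Set.Icc a b :=
        ae_restrict_mem measurableSet_Icc
      have hae : ∀ᵐ ρ ∂(volume.restrict (Set.Icc a b)), m * lam ≤ k' ρ := by
        filter_upwards [h1, h2] with ρ hρ1 hρ2
        have hρpos : 0 < ρ := lt_of_lt_of_le hapos hρ2.1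
        have hkρ : 0 < k ρ := hkpos ρ hρpos
        have h3 : m * k ρ ≤ ρ * k' ρ := (le_div_iff₀ hkρ).mp hρ1.1
        have h4 : lam * ρ ≤ k ρ := hlamle ρ hρ2.1 hρ2.2
        nlinarith
      calc m * lam * (b - a) = ∫ _ in a..b, m * lam := by
            rw [intervalIntegral.integral_const, smul_eq_mul]; ring
        _ ≤ ∫ ρ in a..b, k' ρ :=
            intervalIntegral.integral_mono_ae_restrict hxy hconst hint' hae
    have hka : lam * a ≤ k a := hlamle a le_rfl hxy
    have hkb : lam * b ≤ k b := hlamle b hxy le_rfl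
    have htle : (inner ℝ x y : ℝ) ≤ a * b := real_inner_le_norm x y
    have e1 : ‖x - y‖ ^ 2 = a ^ 2 - 2 * (inner ℝ x y : ℝ) + b ^ 2 := by
      rw [@norm_sub_sq_real]
    have hα : 0 ≤ k a / a := div_nonneg (hkpos a hapos).le hapos.le
    have hβ : 0 ≤ k b / b := div_nonneg (hkpos b hb).le hb.le
    have e2 : ‖F x - F y‖ ^ 2 =
        (k a) ^ 2 - 2 * ((k a / a) * (k b / b)) * (inner ℝ x y : ℝ) + (k b) ^ 2 := by
      rw [hF x, hF y, @norm_sub_sq_real, norm_smul, norm_smul,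
        real_inner_smul_left, real_inner_smul_right,
        Real.norm_eq_abs, Real.norm_eq_abs, abs_of_nonneg hα, abs_of_nonneg hβ]
      rw [mul_pow, mul_pow, div_pow, div_pow]
      rw [← hadef, ← hbdef]
      field_simp
    have hlama : lam ≤ k a / a := (le_div_iff₀ hapos).mpr hka
    have hlamb' : lam ≤ k b / b := (le_div_iff₀ hb).mpr hkb
    have hkab : k a = (k a / a) * a := (div_mul_cancel₀ _ hapos.ne').symm
    have hkbb : k b = (k b / b) * b := (div_mul_cancel₀ _ hb.ne').symm
    set α := k a / a
    set β := k b / b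
    set t := (inner ℝ x y : ℝ) with htdef
    clear_value S lam c α β a b t
    have hsq : (c * lam * ‖x - y‖) ^ 2 ≤ ‖F x - F y‖ ^ 2 := by
      rw [mul_pow, mul_pow, e1, e2, hkab, hkbb]
      have hcl : c * lam ≤ lam := by
        have := mul_le_mul_of_nonneg_right hc1 hlam0; linarith
      have hcl0 : 0 ≤ c * lam := mul_nonneg hc0 hlam0
      have hu : c * lam * (b - a) ≤ β * b - α * a := by
        have hp : 0 ≤ (m - c) * lam * (b - a) :=
          mul_nonneg (mul_nonneg (by linarith) hlam0) (by linarith)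
        nlinarith [hkey, hkab, hkbb, hp]
      have hu0 : 0 ≤ c * lam * (b - a) := mul_nonneg hcl0 (by linarith)
      have h2a : (c * lam) ^ 2 ≤ α * β := by
        have p1 : lam * lam ≤ α * β := mul_le_mul hlama hlamb' hlam0 hα
        have p2 : (c * lam) * (c * lam) ≤ lam * lam :=
          mul_le_mul hcl hcl hcl0 hlam0
        calc (c * lam) ^ 2 = (c * lam) * (c * lam) := sq (c * lam) ▸ rfl
          _ ≤ lam * lam := p2
          _ ≤ α * β := p1
      exact radial_stretching_aux a b α β c lam t hu hu0 h2a htle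
    have hnn : 0 ≤ c * lam * ‖x - y‖ :=
      mul_nonneg (mul_nonneg hc0 hlam0) (norm_nonneg _)
    calc c * lam * ‖x - y‖ = √((c * lam * ‖x - y‖) ^ 2) := (Real.sqrt_sq hnn).symm
      _ ≤ √(‖F x - F y‖ ^ 2) := Real.sqrt_le_sqrt hsq
      _ = ‖F x - F y‖ := Real.sqrt_sq (norm_nonneg _)
end
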